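/- Triangle inequality under composition on a normal domain: if X is a normal space and f_1,...,f_r : X → Y, g_1,...,g_r : Y → Z are fibrewise maps over B, then D_B(g_1∘f_1,...,g_r∘f_r) ≤ D_B(f_1,...,f_r) + D_B(g_1,...,g_r). -/

import Mathlib

open Set

/-- Two continuous maps are fibrewise homotopic over `B`: there is a homotopy
whose every time-slice commutes with the projections to `B`. -/
def FibHomotopic {B X Y : Type*} [TopologicalSpace B] [TopologicalSpace X] [TopologicalSpace Y]
    (pX : X → B) (pY : Y → B) (f g : C(X, Y)) : Prop :=
  ∃ H : f.Homotopy g, ∀ (x : X) (t : unitInterval), pY (H (t, x)) = pX x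

/-- Sequential parametrized homotopic distance of a family of fibrewise maps:
the least `n` such that `X` admits an open cover by `n + 1` open sets on each of
which all the maps are pairwise fibrewise homotopic (`∞` if none exists). -/
noncomputable def fibDist {B X Y ι : Type*} [TopologicalSpace B] [TopologicalSpace X]
    [TopologicalSpace Y] (pX : X → B) (pY : Y → B) (f : ι → C(X, Y)) : ℕ∞ :=
  sInf {n : ℕ∞ | ∃ k : ℕ, (k : ℕ∞) = n ∧ ∃ U : Fin (k + 1) → Set X,
    (∀ i, IsOpen (U i)) ∧ (⋃ i, U i) = Set.univ ∧
    ∀ i s t, FibHomotopic (fun x : U i => pX (x : X)) pY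
      ((f s).restrict (U i)) ((f t).restrict (U i))}

section Aux

variable {B : Type*} [TopologicalSpace B]

/-- Map a homotopy by precomposition with `e` and postcomposition with `k`. -/
def mapHomotopy {A A' Y Z : Type*} [TopologicalSpace A] [TopologicalSpace A']
    [TopologicalSpace Y] [TopologicalSpace Z]
    {F G : C(A, Y)} (H : F.Homotopy G) (e : C(A', A)) (k : C(Y, Z)) :
    ((k.comp F).comp e).Homotopy ((k.comp G).comp e) where
  toFun p := k (H (p.1, e p.2))
  continuous_toFun := k.continuous.comp (H.continuous.comp
    (continuous_fst.prodMk (e.continuous.comp continuous_snd)))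
  map_zero_left x := by simp
  map_one_left x := by simp

@[simp] theorem mapHomotopy_apply {A A' Y Z : Type*} [TopologicalSpace A] [TopologicalSpace A']
    [TopologicalSpace Y] [TopologicalSpace Z]
    {F G : C(A, Y)} (H : F.Homotopy G) (e : C(A', A)) (k : C(Y, Z)) (p) :
    mapHomotopy H e k p = k (H (p.1, e p.2)) := rfl

theorem FibHomotopic.map {A A' Y Z : Type*} [TopologicalSpace A] [TopologicalSpace A']
    [TopologicalSpace Y] [TopologicalSpace Z]
    {pA : A → B} {pA' : A' → B} {pY : Y → B} {pZ : Z → B} {F G : C(A, Y)}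
    (h : FibHomotopic pA pY F G) (e : C(A', A)) (he : ∀ x, pA (e x) = pA' x)
    (k : C(Y, Z)) (hk : ∀ y, pZ (k y) = pY y) :
    FibHomotopic pA' pZ ((k.comp F).comp e) ((k.comp G).comp e) := by
  obtain ⟨H, hH⟩ := h
  exact ⟨mapHomotopy H e k, fun x t => by rw [mapHomotopy_apply, hk, hH, he]⟩

theorem FibHomotopic.symm' {X Y : Type*} [TopologicalSpace X] [TopologicalSpace Y]
    {pX : X → B} {pY : Y → B} {f g : C(X, Y)}
    (h : FibHomotopic pX pY f g) : FibHomotopic pX pY g f := by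
  obtain ⟨H, hH⟩ := h
  exact ⟨H.symm, fun x t => by rw [ContinuousMap.Homotopy.symm_apply]; exact hH x _⟩

theorem FibHomotopic.trans' {X Y : Type*} [TopologicalSpace X] [TopologicalSpace Y]
    {pX : X → B} {pY : Y → B} {f g k : C(X, Y)}
    (h1 : FibHomotopic pX pY f g) (h2 : FibHomotopic pX pY g k) : FibHomotopic pX pY f k := by
  obtain ⟨H, hH⟩ := h1
  obtain ⟨K, hK⟩ := h2
  refine ⟨H.trans K, fun x t => ?_⟩
  rw [ContinuousMap.Homotopy.trans_apply]
  split
  · exact hH x _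
  · exact hK x _

/-- Glue fibrewise homotopies over pairwise disjoint open sets. -/
theorem FibHomotopic.glue {X Y ι' : Type*} [TopologicalSpace X] [TopologicalSpace Y]
    {pX : X → B} {pY : Y → B} (P : ι' → Set X)
    (hP : ∀ i, IsOpen (P i))
    (hd : ∀ i j, i ≠ j → ∀ x, x ∈ P i → x ∈ P j → False)
    {F G : C(X, Y)}
    (h : ∀ i, FibHomotopic (fun x : P i => pX (x : X)) pY
      (F.restrict (P i)) (G.restrict (P i))) :
    FibHomotopic (fun x : (⋃ i, P i) => pX (x : X)) pY
      (F.restrict (⋃ i, P i)) (G.restrict (⋃ i, P i)) := by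
  classical
  set A := ⋃ i, P i with hA
  let H : ∀ i, (F.restrict (P i)).Homotopy (G.restrict (P i)) := fun i => (h i).choose
  have hHp : ∀ i (x : P i) (t : unitInterval), pY ((H i) (t, x)) = pX x := fun i => (h i).choose_spec
  let S : ι' → Set (unitInterval × A) := fun i => {p | (p.2 : X) ∈ P i}
  have hSo : ∀ i, IsOpen (S i) := fun i =>
    (hP i).preimage (continuous_subtype_val.comp continuous_snd)
  let φ : ∀ i, C(S i, Y) := fun i =>
    ⟨fun q => (H i) (q.1.1, ⟨(q.1.2 : X), q.2⟩),
      (H i).continuous.comp (Continuous.prodMk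
        (continuous_fst.comp continuous_subtype_val)
        (Continuous.subtype_mk
          (continuous_subtype_val.comp (continuous_snd.comp continuous_subtype_val)) _))⟩
  have hφ : ∀ (i j) (x : unitInterval × A) (hxi : x ∈ S i) (hxj : x ∈ S j),
      φ i ⟨x, hxi⟩ = φ j ⟨x, hxj⟩ := by
    intro i j x hxi hxj
    rcases eq_or_ne i j with rfl | hij
    · rfl
    · exact absurd (hd i j hij _ hxi hxj) (fun h => h)
  have hS : ∀ x : unitInterval × A, ∃ i, S i ∈ nhds x := by
    intro p
    obtain ⟨i, hi⟩ := mem_iUnion.mp p.2.2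
    exact ⟨i, (hSo i).mem_nhds hi⟩
  let Htot : C(unitInterval × A, Y) := ContinuousMap.liftCover S φ hφ hS
  have hcoe : ∀ (i : ι') (p : unitInterval × A) (hp : p ∈ S i),
      Htot p = (H i) (p.1, ⟨(p.2 : X), hp⟩) := by
    intro i p hp
    exact ContinuousMap.liftCover_coe (i := i) ⟨p, hp⟩
  refine ⟨⟨Htot, ?_, ?_⟩, ?_⟩
  · intro x
    obtain ⟨i, hi⟩ := mem_iUnion.mp x.2
    show Htot (0, x) = _
    rw [hcoe i (0, x) hi, ContinuousMap.Homotopy.apply_zero]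
    rfl
  · intro x
    obtain ⟨i, hi⟩ := mem_iUnion.mp x.2
    show Htot (1, x) = _
    rw [hcoe i (1, x) hi, ContinuousMap.Homotopy.apply_one]
    rfl
  · intro x t
    obtain ⟨i, hi⟩ := mem_iUnion.mp x.2
    have : Htot (t, x) = (H i) (t, ⟨(x : X), hi⟩) := hcoe i (t, x) hi
    show pY (Htot (t, x)) = pX x
    rw [this]
    exact hHp i ⟨(x : X), hi⟩ t

/-- Positive-support functions subordinate to a finite open cover of a normal space. -/
theorem exists_support_family {X : Type*} [TopologicalSpace X] [NormalSpace X]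
    {ι' : Type*} [Finite ι'] (U : ι' → Set X) (hU : ∀ i, IsOpen (U i))
    (hUc : ⋃ i, U i = univ) :
    ∃ φ : ι' → C(X, ℝ), (∀ i x, 0 ≤ φ i x) ∧ (∀ i x, 0 < φ i x → x ∈ U i) ∧
      (∀ x, ∃ i, 0 < φ i x) := by
  obtain ⟨V, hVU, hVo, hVc⟩ := exists_iUnion_eq_closure_subset hU (fun x => Set.toFinite _) hUc
  have key : ∀ i, ∃ φ : C(X, ℝ), EqOn φ 0 (U i)ᶜ ∧ EqOn φ 1 (closure (V i)) ∧
      ∀ x, φ x ∈ Icc (0 : ℝ) 1 := by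
    intro i
    exact exists_continuous_zero_one_of_isClosed (hU i).isClosed_compl isClosed_closure
      (disjoint_compl_left.mono_right (hVc i))
  choose φ hφ0 hφ1 hφ2 using key
  refine ⟨φ, fun i x => (hφ2 i x).1, ?_, ?_⟩
  · intro i x hpos
    by_contra hx
    have : φ i x = 0 := hφ0 i hx
    rw [this] at hpos
    exact lt_irrefl _ hpos
  · intro x
    have hx : x ∈ ⋃ i, V i := hVU ▸ mem_univ x
    obtain ⟨i, hi⟩ := mem_iUnion.mp hx
    refine ⟨i, ?_⟩
    have : φ i x = 1 := hφ1 i (subset_closure hi)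
    rw [this]; exact one_pos

theorem fibDist_spec {B X Y ι : Type*} [TopologicalSpace B] [TopologicalSpace X]
    [TopologicalSpace Y] (pX : X → B) (pY : Y → B) (f : ι → C(X, Y))
    (h : fibDist pX pY f ≠ ⊤) :
    ∃ k : ℕ, fibDist pX pY f = (k : ℕ∞) ∧ ∃ U : Fin (k + 1) → Set X,
      (∀ i, IsOpen (U i)) ∧ (⋃ i, U i) = Set.univ ∧
      ∀ i s t, FibHomotopic (fun x : U i => pX (x : X)) pY
        ((f s).restrict (U i)) ((f t).restrict (U i)) := by
  have hne : {n : ℕ∞ | ∃ k : ℕ, (k : ℕ∞) = n ∧ ∃ U : Fin (k + 1) → Set X,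
      (∀ i, IsOpen (U i)) ∧ (⋃ i, U i) = Set.univ ∧
      ∀ i s t, FibHomotopic (fun x : U i => pX (x : X)) pY
        ((f s).restrict (U i)) ((f t).restrict (U i))}.Nonempty := by
    by_contra hemp
    rw [Set.not_nonempty_iff_eq_empty] at hemp
    exact h (by rw [fibDist, hemp, sInf_empty])
  obtain ⟨k, hk, hU⟩ := csInf_mem hne
  exact ⟨k, hk.symm, hU⟩

end Aux

/-- Triangle inequality under composition, for a normal domain:
`D_B(g_1 ∘ f_1, …, g_r ∘ f_r) ≤ D_B(f_1, …, f_r) + D_B(g_1, …, g_r)`. -/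
theorem stmt12 {B X Y Z : Type*} [TopologicalSpace B] [TopologicalSpace X] [TopologicalSpace Y]
    [TopologicalSpace Z] [NormalSpace X]
    (pX : X → B) (pY : Y → B) (pZ : Z → B)
    (hpX : Continuous pX) (hpY : Continuous pY) (hpZ : Continuous pZ)
    (r : ℕ) (f : Fin r → C(X, Y)) (hf : ∀ i x, pY (f i x) = pX x)
    (g : Fin r → C(Y, Z)) (hg : ∀ i y, pZ (g i y) = pY y) :
    fibDist pX pZ (fun i => (g i).comp (f i)) ≤ fibDist pX pY f + fibDist pY pZ g := by
  classical
  rcases Nat.eq_zero_or_pos r with hr | hr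
  · subst hr
    have h0 : fibDist pX pZ (fun i => (g i).comp (f i)) ≤ 0 := by
      apply sInf_le
      exact ⟨0, rfl, fun _ => univ, fun _ => isOpen_univ, by rw [Set.iUnion_const], fun i s t => s.elim0⟩
    exact le_trans h0 zero_le
  by_cases hF : fibDist pX pY f = ⊤
  · rw [hF, top_add]; exact le_top
  by_cases hG : fibDist pY pZ g = ⊤
  · rw [hG, add_top]; exact le_top
  obtain ⟨m, hm, U, hUo, hUc, hUH⟩ := fibDist_spec pX pY f hF
  obtain ⟨n, hn, V, hVo, hVc, hVH⟩ := fibDist_spec pY pZ g hG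
  set f0 : C(X, Y) := f ⟨0, hr⟩ with hf0
  -- families of nonneg functions
  obtain ⟨φ, hφ0, hφU, hφc⟩ := exists_support_family U hUo hUc
  obtain ⟨ψ, hψ0, hψV, hψc⟩ := exists_support_family (fun j => f0 ⁻¹' (V j))
    (fun j => (hVo j).preimage f0.continuous)
    (by rw [← preimage_iUnion, hVc, preimage_univ])
  set θ : Fin (m + 1) ⊕ Fin (n + 1) → C(X, ℝ) := Sum.elim φ ψ with hθ
  set W : Finset (Fin (m + 1) ⊕ Fin (n + 1)) → Set X := fun R =>
    {x | (∀ a ∈ R, 0 < θ a x) ∧ ∀ a ∈ R, ∀ b ∉ R, θ b x < θ a x} with hW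
  have hWo : ∀ R, IsOpen (W R) := by
    intro R
    have o1 : ∀ a : Fin (m + 1) ⊕ Fin (n + 1), IsOpen {x | a ∈ R → 0 < θ a x} := by
      intro a
      by_cases ha : a ∈ R
      · have : {x | a ∈ R → 0 < θ a x} = {x | 0 < θ a x} := by ext x; simp [ha]
        rw [this]; exact isOpen_lt continuous_const (θ a).continuous
      · have : {x | a ∈ R → 0 < θ a x} = univ := by ext x; simp [ha]
        rw [this]; exact isOpen_univ
    have o2 : ∀ a b : Fin (m + 1) ⊕ Fin (n + 1),
        IsOpen {x | a ∈ R → b ∉ R → θ b x < θ a x} := by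
      intro a b
      by_cases ha : a ∈ R
      · by_cases hb : b ∈ R
        · have : {x | a ∈ R → b ∉ R → θ b x < θ a x} = univ := by ext x; simp [ha, hb]
          rw [this]; exact isOpen_univ
        · have : {x | a ∈ R → b ∉ R → θ b x < θ a x} = {x | θ b x < θ a x} := by
            ext x; simp [ha, hb]
          rw [this]; exact isOpen_lt (θ b).continuous (θ a).continuous
      · have : {x | a ∈ R → b ∉ R → θ b x < θ a x} = univ := by ext x; simp [ha]
        rw [this]; exact isOpen_univ
    have hrw : W R = (⋂ a, {x | a ∈ R → 0 < θ a x}) ∩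
        ⋂ a, ⋂ b, {x | a ∈ R → b ∉ R → θ b x < θ a x} := by
      ext x
      simp only [hW, mem_setOf_eq, mem_inter_iff, mem_iInter]
      tauto
    rw [hrw]
    exact (isOpen_iInter_of_finite o1).inter
      (isOpen_iInter_of_finite fun a => isOpen_iInter_of_finite fun b => o2 a b)
  -- disjointness of distinct pieces of equal cardinality
  have hWd : ∀ R R' : Finset (Fin (m + 1) ⊕ Fin (n + 1)), R.card = R'.card → R ≠ R' →
      ∀ x, x ∈ W R → x ∈ W R' → False := by
    intro R R' hcard hne x hx hx'
    obtain ⟨a, haR, haR'⟩ : ∃ a, a ∈ R ∧ a ∉ R' := by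
      by_contra hcon
      push_neg at hcon
      exact hne (Finset.eq_of_subset_of_card_le (fun a ha => hcon a ha) hcard.ge)
    obtain ⟨b, hbR', hbR⟩ : ∃ b, b ∈ R' ∧ b ∉ R := by
      by_contra hcon
      push_neg at hcon
      exact hne (Finset.eq_of_subset_of_card_le (fun b hb => hcon b hb) hcard.le).symm
    exact absurd (lt_trans (hx.2 a haR b hbR) (hx'.2 b hbR' a haR')) (lt_irrefl _)
  -- the piece containing a given point
  set Rx : X → Finset (Fin (m + 1) ⊕ Fin (n + 1)) := fun x =>
    Finset.univ.filter (fun a => 0 < θ a x) with hRx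
  have hxRx : ∀ x, x ∈ W (Rx x) := by
    intro x
    constructor
    · intro a ha
      exact (Finset.mem_filter.mp ha).2
    · intro a ha b hb
      have hbnonpos : ¬ 0 < θ b x := fun hpos =>
        hb (Finset.mem_filter.mpr ⟨Finset.mem_univ _, hpos⟩)
      exact lt_of_le_of_lt (not_lt.mp hbnonpos) (Finset.mem_filter.mp ha).2
  have hRxl : ∀ x, ∃ i, Sum.inl i ∈ Rx x := by
    intro x
    obtain ⟨i, hi⟩ := hφc x
    exact ⟨i, Finset.mem_filter.mpr ⟨Finset.mem_univ _, hi⟩⟩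
  have hRxr : ∀ x, ∃ j, Sum.inr j ∈ Rx x := by
    intro x
    obtain ⟨j, hj⟩ := hψc x
    exact ⟨j, Finset.mem_filter.mpr ⟨Finset.mem_univ _, hj⟩⟩
  -- goodness predicate and mixed cover
  set good : Finset (Fin (m + 1) ⊕ Fin (n + 1)) → Prop := fun R =>
    (∃ i, Sum.inl i ∈ R) ∧ (∃ j, Sum.inr j ∈ R) with hgood
  set C : Fin (m + n + 1) → Set X := fun k =>
    ⋃ R : {R : Finset (Fin (m + 1) ⊕ Fin (n + 1)) // R.card = (k : ℕ) + 2 ∧ good R}, W R.1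
    with hC
  have hCo : ∀ k, IsOpen (C k) := fun k => isOpen_iUnion fun R => hWo R.1
  have hCc : (⋃ k, C k) = univ := by
    apply eq_univ_of_forall
    intro x
    have hcard_le : (Rx x).card ≤ m + n + 2 := by
      have := Finset.card_le_univ (Rx x)
      simp only [Fintype.card_sum, Fintype.card_fin] at this
      omega
    have hcard_ge : 2 ≤ (Rx x).card := by
      obtain ⟨i, hi⟩ := hRxl x
      obtain ⟨j, hj⟩ := hRxr x
      have : 1 < (Rx x).card := Finset.one_lt_card.mpr ⟨_, hi, _, hj, by simp⟩
      omega
    refine mem_iUnion.mpr ⟨⟨(Rx x).card - 2, by omega⟩, ?_⟩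
    refine mem_iUnion.mpr ⟨⟨Rx x, ?_, hRxl x, hRxr x⟩, hxRx x⟩
    simp only []
    omega
  have hCH : ∀ (k : Fin (m + n + 1)) (s t : Fin r),
      FibHomotopic (fun x : C k => pX (x : X)) pZ
        (((fun i => (g i).comp (f i)) s).restrict (C k))
        (((fun i => (g i).comp (f i)) t).restrict (C k)) := by
    simp only [hC]
    intro k s t
    apply FibHomotopic.glue
    · exact fun R => hWo R.1
    · -- disjointness
      intro R R' hne x hxR hxR'
      exact hWd R.1 R'.1 (by rw [R.2.1, R'.2.1]) (fun h => hne (Subtype.ext h)) x hxR hxR'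
    · -- on each piece
      intro R
      obtain ⟨hcard, ⟨i, hi⟩, ⟨j, hj⟩⟩ := R.2
      have hsubU : W R.1 ⊆ U i := fun x hx => hφU i x (hx.1 _ hi)
      have hsubV : W R.1 ⊆ f0 ⁻¹' (V j) := fun x hx => hψV j x (hx.1 _ hj)
      set eU : C(W R.1, U i) := ⟨fun x => ⟨(x : X), hsubU x.2⟩,
        Continuous.subtype_mk continuous_subtype_val _⟩ with heU
      set eV : C(W R.1, V j) := ⟨fun x => ⟨f0 (x : X), hsubV x.2⟩,
        Continuous.subtype_mk (f0.continuous.comp continuous_subtype_val) _⟩ with heV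
      -- middle maps
      have stepA : ∀ s' : Fin r, FibHomotopic (fun x : W R.1 => pX (x : X)) pZ
          (((g s').comp (f s')).restrict (W R.1)) (((g s').comp f0).restrict (W R.1)) := by
        intro s'
        have h1 := (hUH i s' ⟨0, hr⟩).map eU (fun x => rfl) (g s') (hg s')
        have e1 : ((g s').comp ((f s').restrict (U i))).comp eU
            = ((g s').comp (f s')).restrict (W R.1) := by ext x; rfl
        have e2 : ((g s').comp ((f ⟨0, hr⟩).restrict (U i))).comp eU
            = ((g s').comp f0).restrict (W R.1) := by ext x; rfl
        rwa [e1, e2] at h1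
      have stepB : FibHomotopic (fun x : W R.1 => pX (x : X)) pZ
          (((g s).comp f0).restrict (W R.1)) (((g t).comp f0).restrict (W R.1)) := by
        have h2 := (hVH j s t).map eV (fun x => hf ⟨0, hr⟩ (x : X)) (ContinuousMap.id Z)
          (fun z => rfl)
        have e1 : ((ContinuousMap.id Z).comp ((g s).restrict (V j))).comp eV
            = ((g s).comp f0).restrict (W R.1) := by ext x; rfl
        have e2 : ((ContinuousMap.id Z).comp ((g t).restrict (V j))).comp eV
            = ((g t).comp f0).restrict (W R.1) := by ext x; rfl
        rwa [e1, e2] at h2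
      exact ((stepA s).trans' stepB).trans' (stepA t).symm'
  have final : (fibDist pX pZ fun i => (g i).comp (f i)) ≤ ((m + n : ℕ) : ℕ∞) :=
    sInf_le ⟨m + n, rfl, C, hCo, hCc, hCH⟩
  rw [hm, hn]
  calc (fibDist pX pZ fun i => (g i).comp (f i)) ≤ ((m + n : ℕ) : ℕ∞) := final
    _ = (m : ℕ∞) + (n : ℕ∞) := by push_cast; rfl
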